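/- Every infinite classical Sidon set A of positive integers satisfies liminf_{n→∞} A(n)·√(log n / n) < ∞; in particular, there is no infinite Sidon set with A(n) ≥ c√n for some constant c > 0 and all sufficiently large n. -/

import Mathlib

open Finset

namespace ErdosSidon

noncomputable def octF (A : Set ℕ) (i : ℕ) : Finset ℕ :=
  @Finset.filter _ (fun a => a ∈ A) (Classical.decPred _) (Finset.Ioc (2^i) (2^(i+1)))

noncomputable def mF (A : Set ℕ) (i : ℕ) : ℕ := (octF A i).card

noncomputable def cntF (A : Set ℕ) (n : ℕ) : ℕ :=
  (@Finset.filter _ (fun a => a ∈ A) (Classical.decPred _) (Finset.range (n+1))).card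

noncomputable def pairsF (A : Set ℕ) (i s : ℕ) : Finset (ℕ × ℕ) :=
  ((octF A i) ×ˢ (octF A i)).filter (fun p => p.1 < p.2 ∧ p.2 - p.1 < 2^s)

noncomputable def qF (A : Set ℕ) (i s : ℕ) : ℕ := (pairsF A i s).card

variable {A : Set ℕ}

lemma mem_octF {a i : ℕ} : a ∈ octF A i ↔ (2^i < a ∧ a ≤ 2^(i+1)) ∧ a ∈ A := by
  simp [octF, Finset.mem_Ioc]

lemma mem_pairsF {p : ℕ × ℕ} {i s : ℕ} :
    p ∈ pairsF A i s ↔ (p.1 ∈ octF A i ∧ p.2 ∈ octF A i) ∧ p.1 < p.2 ∧ p.2 - p.1 < 2^s := by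
  simp [pairsF, Finset.mem_product, and_assoc]

lemma diff_inj (hsidon : ∀ a ∈ A, ∀ b ∈ A, ∀ c ∈ A, ∀ d ∈ A,
      a + b = c + d → ({a, b} : Set ℕ) = {c, d})
    {a b c d : ℕ} (ha : a ∈ A) (hb : b ∈ A) (hc : c ∈ A) (hd : d ∈ A)
    (hab : a < b) (hcd : c < d) (h : b - a = d - c) : a = c ∧ b = d := by
  have hsum : b + c = d + a := by omega
  have := hsidon b hb c hc d hd a ha hsum
  have hbmem : b ∈ ({d, a} : Set ℕ) := by rw [← this]; simp
  have hb' : b = d ∨ b = a := by simpa using hbmem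
  rcases hb' with h1 | h1
  · omega
  · omega

lemma mF_le (A : Set ℕ) (i : ℕ) : mF A i ≤ 2^i := by
  have hsub : octF A i ⊆ Finset.Ioc (2^i) (2^(i+1)) := by
    intro a ha; exact Finset.mem_Ioc.2 (mem_octF.1 ha).1
  have h1 : mF A i ≤ (Finset.Ioc (2^i) (2^(i+1))).card := Finset.card_le_card hsub
  rw [Nat.card_Ioc] at h1
  rw [pow_succ] at h1
  omega

/-- budget: all within-octave pairs with difference < 2^s, over octaves i ∈ [s,J],
are ≤ 2^s in total (distinct differences). -/
lemma budget (hsidon : ∀ a ∈ A, ∀ b ∈ A, ∀ c ∈ A, ∀ d ∈ A,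
      a + b = c + d → ({a, b} : Set ℕ) = {c, d}) (s J : ℕ) :
    ∑ i ∈ Icc s J, qF A i s ≤ 2^s := by
  classical
  have hdisj : ∀ x ∈ Icc s J, ∀ y ∈ Icc s J, x ≠ y → Disjoint (pairsF A x s) (pairsF A y s) := by
    intro x _ y _ hxy
    rw [Finset.disjoint_left]
    intro p hpx hpy
    have h1 := (mem_pairsF.1 hpx).1.1
    have h2 := (mem_pairsF.1 hpy).1.1
    rw [mem_octF] at h1 h2
    rcases Nat.lt_or_ge x y with h | h
    · have : (2:ℕ)^(x+1) ≤ 2^y := Nat.pow_le_pow_right (by norm_num) h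
      omega
    · have hyx : y < x := by omega
      have : (2:ℕ)^(y+1) ≤ 2^x := Nat.pow_le_pow_right (by norm_num) hyx
      omega
  have hcard : ∑ i ∈ Icc s J, qF A i s = ((Icc s J).biUnion (fun i => pairsF A i s)).card :=
    (Finset.card_biUnion hdisj).symm
  rw [hcard]
  have hmaps : ∀ p ∈ (Icc s J).biUnion (fun i => pairsF A i s),
      p.2 - p.1 ∈ Finset.Ico 1 (2^s) := by
    intro p hp
    obtain ⟨i, _, hpi⟩ := Finset.mem_biUnion.1 hp
    have h := mem_pairsF.1 hpi
    rw [Finset.mem_Ico]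
    omega
  have hinj : Set.InjOn (fun p : ℕ × ℕ => p.2 - p.1)
      ((Icc s J).biUnion (fun i => pairsF A i s)) := by
    intro p hp q hq heq
    simp only [Finset.coe_biUnion, Set.mem_iUnion, Finset.mem_coe] at hp hq
    obtain ⟨i, _, hpi⟩ := hp
    obtain ⟨j, _, hqj⟩ := hq
    have h1 := mem_pairsF.1 hpi
    have h2 := mem_pairsF.1 hqj
    have := diff_inj hsidon (mem_octF.1 h1.1.1).2 (mem_octF.1 h1.1.2).2
      (mem_octF.1 h2.1.1).2 (mem_octF.1 h2.1.2).2 h1.2.1 h2.2.1 heq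
    exact Prod.ext this.1 this.2
  have hb := Finset.card_le_card_of_injOn _ hmaps hinj
  rw [Nat.card_Ico] at hb
  have hp : 0 < 2^s := Nat.pow_pos (by norm_num)
  omega


/-- production: subdivision + Cauchy-Schwarz. -/
lemma production (A : Set ℕ) (i s : ℕ) (hs : s ≤ i) :
    (mF A i : ℝ)^2 ≤ 2^(i-s) * (2 * qF A i s + mF A i) := by
  classical
  set K : ℕ := 2^(i-s) with hK
  set T : Finset ℕ := octF A i with hT
  set part : ℕ → ℕ := fun a => (a - 2^i - 1) / 2^s with hpart
  have hps : 0 < 2^s := Nat.pow_pos (by norm_num)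
  have hmapsto : ∀ a ∈ T, part a ∈ Finset.range K := by
    intro a ha
    rw [Finset.mem_range, hK]
    have h1 := (mem_octF.1 ha).1
    have h2 : a - 2^i - 1 < 2^(i-s) * 2^s := by
      rw [← pow_add]
      have : i - s + s = i := by omega
      rw [this]
      omega
    rw [mul_comm] at h2
    exact Nat.div_lt_of_lt_mul h2
  -- fiber counts
  set n : ℕ → ℕ := fun p => (T.filter (fun a => part a = p)).card with hn
  have hsum : ∑ p ∈ Finset.range K, n p = mF A i := by
    rw [hn]
    exact (Finset.card_eq_sum_card_fiberwise hmapsto).symm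
  -- same-part ordered pairs
  set E : Finset (ℕ × ℕ) := (T ×ˢ T).filter (fun p => part p.1 = part p.2) with hE
  have hEcard : E.card = ∑ p ∈ Finset.range K, (n p)^2 := by
    have hEmaps : ∀ q ∈ E, part q.1 ∈ Finset.range K := by
      intro q hq
      have := Finset.mem_filter.1 hq
      exact hmapsto _ (Finset.mem_product.1 this.1).1
    rw [Finset.card_eq_sum_card_fiberwise hEmaps]
    apply Finset.sum_congr rfl
    intro p _
    have : E.filter (fun q => part q.1 = p)
        = (T.filter (fun a => part a = p)) ×ˢ (T.filter (fun a => part a = p)) := by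
      ext ⟨a, b⟩
      simp only [hE, Finset.mem_filter, Finset.mem_product]
      constructor
      · rintro ⟨⟨⟨h1, h2⟩, h3⟩, h4⟩
        exact ⟨⟨h1, h4⟩, h2, by rw [← h3]; exact h4⟩
      · rintro ⟨⟨h1, h2⟩, h3, h4⟩
        exact ⟨⟨⟨h1, h3⟩, by rw [h2, h4]⟩, h2⟩
    rw [this, Finset.card_product, hn, sq]
  -- diagonal
  have hdiag : (E.filter (fun q => q.1 = q.2)).card = mF A i := by
    have : E.filter (fun q => q.1 = q.2) = T.image (fun a => (a, a)) := by
      ext ⟨a, b⟩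
      simp only [hE, Finset.mem_filter, Finset.mem_product, Finset.mem_image]
      constructor
      · rintro ⟨⟨⟨h1, h2⟩, h3⟩, h4⟩
        exact ⟨a, h1, by simp_all⟩
      · rintro ⟨c, hc, hcab⟩
        obtain ⟨rfl, rfl⟩ : c = a ∧ c = b := by
          constructor <;> [exact congrArg Prod.fst hcab; exact congrArg Prod.snd hcab]
        exact ⟨⟨⟨hc, hc⟩, rfl⟩, rfl⟩
    rw [this, Finset.card_image_of_injective _ (fun x y h => congrArg Prod.fst h)]
    rfl
  -- swap symmetric halves
  have hswap : (E.filter (fun q => q.2 < q.1)).card = (E.filter (fun q => q.1 < q.2)).card := by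
    have himg : E.filter (fun q => q.2 < q.1)
        = (E.filter (fun q => q.1 < q.2)).image Prod.swap := by
      ext ⟨a, b⟩
      simp only [hE, Finset.mem_filter, Finset.mem_product, Finset.mem_image, Prod.exists]
      constructor
      · rintro ⟨⟨⟨h1, h2⟩, h3⟩, h4⟩
        exact ⟨b, a, ⟨⟨⟨h2, h1⟩, h3.symm⟩, h4⟩, rfl⟩
      · rintro ⟨x, y, ⟨⟨⟨h1, h2⟩, h3⟩, h4⟩, heq⟩
        have hxb : y = a ∧ x = b := by
          constructor <;> [exact congrArg Prod.fst heq; exact congrArg Prod.snd heq]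
        obtain ⟨rfl, rfl⟩ := hxb
        exact ⟨⟨⟨h2, h1⟩, h3.symm⟩, h4⟩
    rw [himg, Finset.card_image_of_injective _ Prod.swap_injective]
  -- partition of E
  have hsplit : E.card = mF A i + 2 * (E.filter (fun q => q.1 < q.2)).card := by
    have h1 : E.card = (E.filter (fun q => q.1 = q.2)).card
        + (E.filter (fun q => ¬ q.1 = q.2)).card :=
      (Finset.card_filter_add_card_filter_not _).symm
    have h2 : E.filter (fun q => ¬ q.1 = q.2)
        = (E.filter (fun q => q.1 < q.2)) ∪ (E.filter (fun q => q.2 < q.1)) := by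
      rw [← Finset.filter_or]
      apply Finset.filter_congr
      intro q _
      constructor
      · intro h; omega
      · intro h; omega
    have h3 : Disjoint (E.filter (fun q => q.1 < q.2)) (E.filter (fun q => q.2 < q.1)) := by
      rw [Finset.disjoint_left]
      intro q hq1 hq2
      have := (Finset.mem_filter.1 hq1).2
      have := (Finset.mem_filter.1 hq2).2
      omega
    rw [h1, h2, Finset.card_union_of_disjoint h3, hswap, hdiag]
    ring
  -- strict pairs are close pairs
  have hsubset : E.filter (fun q => q.1 < q.2) ⊆ pairsF A i s := by
    intro ⟨a, b⟩ hq
    have h1 := Finset.mem_filter.1 hq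
    have h2 := Finset.mem_filter.1 h1.1
    have hab := h1.2
    have hmem := Finset.mem_product.1 h2.1
    have hpeq : part a = part b := h2.2
    rw [mem_pairsF]
    refine ⟨⟨hmem.1, hmem.2⟩, hab, ?_⟩
    -- difference bound from equal parts
    have ha' := (mem_octF.1 hmem.1).1
    have hb' := (mem_octF.1 hmem.2).1
    have e1 := Nat.div_add_mod (a - 2^i - 1) (2^s)
    have e2 := Nat.div_add_mod (b - 2^i - 1) (2^s)
    have m1 := Nat.mod_lt (a - 2^i - 1) hps
    have m2 := Nat.mod_lt (b - 2^i - 1) hps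
    rw [hpart] at hpeq
    simp only at hpeq
    rw [hpeq] at e1
    omega
  have hQ : (E.filter (fun q => q.1 < q.2)).card ≤ qF A i s :=
    Finset.card_le_card hsubset
  -- Cauchy-Schwarz
  have hCS : ((mF A i : ℝ))^2 ≤ (K : ℝ) * ∑ p ∈ Finset.range K, ((n p : ℝ))^2 := by
    have := Finset.sum_mul_sq_le_sq_mul_sq (Finset.range K) (fun _ => (1:ℝ))
      (fun p => (n p : ℝ))
    simp only [one_mul, one_pow] at this
    rw [Finset.sum_const, Finset.card_range] at this
    have hcast : (∑ p ∈ Finset.range K, (n p : ℝ)) = (mF A i : ℝ) := by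
      rw [← Nat.cast_sum, hsum]
    rw [hcast] at this
    simpa [nsmul_eq_mul] using this
  have hsum2 : (∑ p ∈ Finset.range K, ((n p : ℝ))^2) = (E.card : ℝ) := by
    rw [hEcard]
    push_cast
    rfl
  rw [hsum2] at hCS
  have hEbound : (E.card : ℝ) ≤ 2 * qF A i s + mF A i := by
    rw [hsplit]
    push_cast
    have : ((E.filter (fun q => q.1 < q.2)).card : ℝ) ≤ (qF A i s : ℝ) := by
      exact_mod_cast hQ
    linarith
  calc ((mF A i : ℝ))^2 ≤ (K:ℝ) * E.card := hCS
    _ ≤ (K:ℝ) * (2 * qF A i s + mF A i) := by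
        apply mul_le_mul_of_nonneg_left hEbound
        positivity
    _ = 2^(i-s) * (2 * qF A i s + mF A i) := by
        rw [hK]; push_cast; ring


/-- class bound: heavy active octaves at class s. -/
lemma classBound (hsidon : ∀ a ∈ A, ∀ b ∈ A, ∀ c ∈ A, ∀ d ∈ A,
      a + b = c + d → ({a, b} : Set ℕ) = {c, d}) (s J : ℕ) :
    ∑ i ∈ (Icc s J).filter (fun i => 2^i ≤ (mF A i)^4 ∧ i - i/4 + 1 ≤ s),
      ((mF A i : ℝ)^2 / 2^(i+2)) ≤ 1 := by
  classical
  have hstep : ∀ i ∈ (Icc s J).filter (fun i => 2^i ≤ (mF A i)^4 ∧ i - i/4 + 1 ≤ s),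
      (mF A i : ℝ)^2 / 2^(i+2) ≤ (qF A i s : ℝ) / 2^s := by
    intro i hi
    have hi' := Finset.mem_filter.1 hi
    have hsi : s ≤ i := (Finset.mem_Icc.1 hi'.1).1
    have hheavy : 2^i ≤ (mF A i)^4 := hi'.2.1
    have hscond : i - i/4 + 1 ≤ s := hi'.2.2
    have hm4 : (2:ℕ)^(i+1) ≤ mF A i * 2^s := by
      apply (Nat.pow_le_pow_iff_left (n := 4) (by norm_num)).1
      have hrw : (mF A i * 2^s)^4 = (mF A i)^4 * 2^(4*s) := by
        rw [mul_pow, ← pow_mul, mul_comm s 4]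
      rw [hrw, ← pow_mul]
      calc (2:ℕ)^((i+1)*4) ≤ 2^(i + 4*s) := by
            apply Nat.pow_le_pow_right (by norm_num)
            have := Nat.div_le_self i 4
            have h44 : 4 * (i/4) ≤ i := by omega
            omega
        _ = 2^i * 2^(4*s) := by rw [pow_add]
        _ ≤ (mF A i)^4 * 2^(4*s) := Nat.mul_le_mul_right _ hheavy
    -- real arithmetic
    have hprod := production A i s hsi
    set m : ℝ := (mF A i : ℝ) with hm
    set Q : ℝ := (qF A i s : ℝ) with hq
    have hm0 : 0 ≤ m := by positivity
    have hQ0 : 0 ≤ Q := by positivity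
    have hmc : (2:ℝ)^(i+1) ≤ m * 2^s := by
      have := hm4
      have : ((2^(i+1) : ℕ) : ℝ) ≤ ((mF A i * 2^s : ℕ) : ℝ) := by exact_mod_cast this
      push_cast at this
      exact this
    -- m ≤ m^2 * 2^s / 2^(i+1)
    have hmle : m * 2^(i+1) ≤ m^2 * 2^s := by
      calc m * 2^(i+1) ≤ m * (m * 2^s) := by
            apply mul_le_mul_of_nonneg_left hmc hm0
        _ = m^2 * 2^s := by ring
    -- production: m^2 ≤ 2^(i-s) * (2Q + m)
    have hpow : (2:ℝ)^(i-s) * 2^s = 2^i := by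
      rw [← pow_add]
      congr 1
      omega
    -- multiply production by 2^s
    have h1 : m^2 * 2^s ≤ 2^i * (2*Q + m) := by
      calc m^2 * 2^s ≤ (2^(i-s) * (2*Q + m)) * 2^s := by
            apply mul_le_mul_of_nonneg_right hprod (by positivity)
        _ = (2^(i-s) * 2^s) * (2*Q + m) := by ring
        _ = 2^i * (2*Q + m) := by rw [hpow]
    -- m^2 * 2^s ≤ 2^{i+1}Q*2 + 2^i * m ≤ 2^{i+1}*2*Q + (m^2 2^s)/2
    have h2 : m * 2^i ≤ m^2 * 2^s / 2 := by
      have : m * 2^(i+1) = 2 * (m * 2^i) := by rw [pow_succ]; ring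
      nlinarith [hmle]
    have h3 : m^2 * 2^s / 2 ≤ 2^(i+1) * Q := by
      have : m^2 * 2^s ≤ 2^i * 2 * Q + m * 2^i := by nlinarith [h1]
      have h4 : (2:ℝ)^(i+1) = 2^i * 2 := by rw [pow_succ]
      nlinarith [h2]
    -- conclude: m^2 / 2^(i+2) ≤ Q / 2^s
    rw [div_le_div_iff₀ (by positivity) (by positivity)]
    have h5 : (2:ℝ)^(i+2) = 2^(i+1) * 2 := by rw [pow_succ]
    nlinarith [h3]
  calc ∑ i ∈ (Icc s J).filter (fun i => 2^i ≤ (mF A i)^4 ∧ i - i/4 + 1 ≤ s),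
        ((mF A i : ℝ)^2 / 2^(i+2))
      ≤ ∑ i ∈ (Icc s J).filter (fun i => 2^i ≤ (mF A i)^4 ∧ i - i/4 + 1 ≤ s),
        ((qF A i s : ℝ) / 2^s) := Finset.sum_le_sum hstep
    _ ≤ ∑ i ∈ Icc s J, ((qF A i s : ℝ) / 2^s) := by
        apply Finset.sum_le_sum_of_subset_of_nonneg (Finset.filter_subset _ _)
        intro i _ _
        positivity
    _ = (∑ i ∈ Icc s J, (qF A i s : ℝ)) / 2^s := by rw [Finset.sum_div]
    _ ≤ 1 := by
        rw [div_le_one (by positivity)]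
        have := budget hsidon s J
        have hcast : (∑ i ∈ Icc s J, (qF A i s : ℝ)) = ((∑ i ∈ Icc s J, qF A i s : ℕ) : ℝ) := by
          push_cast; rfl
        rw [hcast]
        exact_mod_cast this

/-- summed class bound: heavy octaves weighted by i/4. -/
lemma heavySum (hsidon : ∀ a ∈ A, ∀ b ∈ A, ∀ c ∈ A, ∀ d ∈ A,
      a + b = c + d → ({a, b} : Set ℕ) = {c, d}) (J : ℕ) :
    ∑ i ∈ (range (J+1)).filter (fun i => 2^i ≤ (mF A i)^4),
      ((i/4 : ℕ) : ℝ) * ((mF A i : ℝ)^2 / 2^(i+2)) ≤ (J+1 : ℝ) := by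
  classical
  have key : ∀ s ∈ range (J+1),
      (∑ i ∈ range (J+1), (if s ≤ i ∧ 2^i ≤ (mF A i)^4 ∧ i - i/4 + 1 ≤ s
        then (mF A i : ℝ)^2 / 2^(i+2) else 0)) ≤ 1 := by
    intro s hs
    have hset : (range (J+1)).filter
        (fun i => s ≤ i ∧ 2^i ≤ (mF A i)^4 ∧ i - i/4 + 1 ≤ s)
        = (Icc s J).filter (fun i => 2^i ≤ (mF A i)^4 ∧ i - i/4 + 1 ≤ s) := by
      ext i
      simp only [Finset.mem_filter, Finset.mem_range, Finset.mem_Icc, Nat.lt_succ_iff]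
      tauto
    rw [← Finset.sum_filter, hset]
    exact classBound hsidon s J
  have total : (∑ s ∈ range (J+1), ∑ i ∈ range (J+1),
      (if s ≤ i ∧ 2^i ≤ (mF A i)^4 ∧ i - i/4 + 1 ≤ s
        then (mF A i : ℝ)^2 / 2^(i+2) else 0)) ≤ (J+1 : ℝ) := by
    calc (∑ s ∈ range (J+1), ∑ i ∈ range (J+1),
        (if s ≤ i ∧ 2^i ≤ (mF A i)^4 ∧ i - i/4 + 1 ≤ s
          then (mF A i : ℝ)^2 / 2^(i+2) else 0))
        ≤ ∑ _s ∈ range (J+1), (1:ℝ) := Finset.sum_le_sum key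
      _ = (J+1 : ℝ) := by simp
  rw [Finset.sum_comm] at total
  have inner : ∀ i ∈ range (J+1),
      (∑ s ∈ range (J+1), (if s ≤ i ∧ 2^i ≤ (mF A i)^4 ∧ i - i/4 + 1 ≤ s
        then (mF A i : ℝ)^2 / 2^(i+2) else 0))
      = (if 2^i ≤ (mF A i)^4 then ((i/4 : ℕ) : ℝ) * ((mF A i : ℝ)^2 / 2^(i+2)) else 0) := by
    intro i hi
    have hiJ : i ≤ J := Nat.lt_succ_iff.1 (Finset.mem_range.1 hi)
    by_cases hH : 2^i ≤ (mF A i)^4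
    · rw [if_pos hH]
      have hrw : ∀ s, (if s ≤ i ∧ 2^i ≤ (mF A i)^4 ∧ i - i/4 + 1 ≤ s
          then (mF A i : ℝ)^2 / 2^(i+2) else 0)
          = (if s ≤ i ∧ i - i/4 + 1 ≤ s then (mF A i : ℝ)^2 / 2^(i+2) else 0) := by
        intro s
        by_cases h1 : s ≤ i ∧ i - i/4 + 1 ≤ s
        · rw [if_pos ⟨h1.1, hH, h1.2⟩, if_pos h1]
        · rw [if_neg (by tauto), if_neg h1]
      simp only [hrw]
      rw [← Finset.sum_filter]
      have hset : (range (J+1)).filter (fun s => s ≤ i ∧ i - i/4 + 1 ≤ s)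
          = Icc (i - i/4 + 1) i := by
        ext t
        simp only [Finset.mem_filter, Finset.mem_range, Finset.mem_Icc, Nat.lt_succ_iff]
        omega
      rw [hset, Finset.sum_const, Nat.card_Icc]
      have hcard : i + 1 - (i - i/4 + 1) = i/4 := by omega
      rw [hcard, nsmul_eq_mul]
    · rw [if_neg hH]
      apply Finset.sum_eq_zero
      intro s _
      rw [if_neg (by tauto)]
  rw [Finset.sum_congr rfl inner] at total
  rw [← Finset.sum_filter] at total
  exact total

/-- covering: count up to 2^(j+1) is at most 1 + sum of octave counts. -/
lemma cover (hpos : ∀ a ∈ A, 1 ≤ a) (j : ℕ) :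
    cntF A (2^(j+1)) ≤ 1 + ∑ i ∈ range (j+1), mF A i := by
  classical
  have hsub : (@Finset.filter _ (fun a => a ∈ A) (Classical.decPred _)
      (Finset.range (2^(j+1)+1)))
      ⊆ insert 1 ((range (j+1)).biUnion (fun i => octF A i)) := by
    intro a ha
    have hmem := Finset.mem_filter.1 ha
    have haA : a ∈ A := hmem.2
    have halt : a ≤ 2^(j+1) := by
      have := Finset.mem_range.1 hmem.1
      omega
    have ha1 : 1 ≤ a := hpos a haA
    rcases Nat.eq_or_lt_of_le ha1 with h1 | h1
    · exact Finset.mem_insert.2 (Or.inl h1.symm)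
    · apply Finset.mem_insert.2
      right
      have ha2 : 2 ≤ a := h1
      set i := Nat.log 2 (a-1) with hi
      have hlow : 2^i ≤ a - 1 := Nat.pow_log_le_self 2 (by omega)
      have hhigh : a - 1 < 2^(i+1) := Nat.lt_pow_succ_log_self (by norm_num) (a-1)
      have hij : i ≤ j := by
        by_contra hc
        have : j + 1 ≤ i := by omega
        have h2 : (2:ℕ)^(j+1) ≤ 2^i := Nat.pow_le_pow_right (by norm_num) this
        omega
      apply Finset.mem_biUnion.2
      exact ⟨i, Finset.mem_range.2 (by omega), mem_octF.2 ⟨⟨by omega, by omega⟩, haA⟩⟩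
  have hc := Finset.card_le_card hsub
  calc cntF A (2^(j+1)) ≤ (insert 1 ((range (j+1)).biUnion (fun i => octF A i))).card := hc
    _ ≤ 1 + ((range (j+1)).biUnion (fun i => octF A i)).card := by
        have := Finset.card_insert_le 1 ((range (j+1)).biUnion (fun i => octF A i))
        omega
    _ ≤ 1 + ∑ i ∈ range (j+1), mF A i := by
        have h1 := Finset.card_biUnion_le (s := range (j+1)) (t := fun i => octF A i)
        have h2 : ∑ i ∈ range (j+1), mF A i = ∑ a ∈ range (j+1), (octF A a).card := rfl
        omega

section Geometry

noncomputable def rr : ℝ := (Real.sqrt 2)⁻¹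

lemma sqrt2_pos : 0 < Real.sqrt 2 := Real.sqrt_pos.2 (by norm_num)

lemma rr_pos : 0 < rr := inv_pos.2 sqrt2_pos

lemma rr_sq : rr^2 = 1/2 := by
  rw [rr, inv_pow, Real.sq_sqrt (by norm_num : (0:ℝ) ≤ 2)]
  norm_num

lemma rr_le : rr ≤ 3/4 := by
  rw [rr, inv_le_comm₀ sqrt2_pos (by norm_num)]
  nlinarith [Real.sq_sqrt (by norm_num : (0:ℝ) ≤ 2), Real.sqrt_nonneg 2]

lemma geom_bound (x : ℝ) (hx0 : 0 ≤ x) (hx1 : x ≤ 8/9) (n : ℕ) :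
    ∑ u ∈ range n, x^u ≤ 9 := by
  have h1 : (∑ u ∈ range n, x^u) * (x - 1) = x^n - 1 := geom_sum_mul x n
  have hxn : (0:ℝ) ≤ x^n := pow_nonneg hx0 n
  have hsum0 : (0:ℝ) ≤ ∑ u ∈ range n, x^u :=
    Finset.sum_nonneg (fun u _ => pow_nonneg hx0 u)
  nlinarith [hsum0, hxn]

lemma geom_rr (n : ℕ) : ∑ u ∈ range n, rr^u ≤ 4 := by
  have h1 : (∑ u ∈ range n, rr^u) * (rr - 1) = rr^n - 1 := geom_sum_mul rr n
  have hxn : (0:ℝ) ≤ rr^n := pow_nonneg rr_pos.le n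
  have hsum0 : (0:ℝ) ≤ ∑ u ∈ range n, rr^u :=
    Finset.sum_nonneg (fun u _ => pow_nonneg rr_pos.le u)
  nlinarith [rr_le, rr_pos]

noncomputable def ρ : ℝ := Real.sqrt rr

lemma ρ_pos : 0 < ρ := Real.sqrt_pos.2 rr_pos

lemma ρ_sq : ρ^2 = rr := Real.sq_sqrt rr_pos.le

lemma ρ_le : ρ ≤ 8/9 := by
  rw [ρ]
  have h1 : rr ≤ (8/9:ℝ)^2 := by
    nlinarith [rr_le]
  calc Real.sqrt rr ≤ Real.sqrt ((8/9:ℝ)^2) := Real.sqrt_le_sqrt h1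
    _ = 8/9 := Real.sqrt_sq (by norm_num)

lemma u_rho (u : ℕ) : (u:ℝ) * ρ^u ≤ 8 := by
  have key : ∀ v : ℕ, (v:ℝ) ≤ 8 * (9/8)^v := by
    intro v
    induction v with
    | zero => norm_num
    | succ k ih =>
      have h1 : (1:ℝ) ≤ (9/8:ℝ)^k := one_le_pow₀ (by norm_num)
      have : ((k:ℝ)+1) ≤ 8*(9/8)^k + (9/8)^k := by push_cast; linarith
      calc ((k+1 : ℕ):ℝ) = (k:ℝ)+1 := by push_cast; ring
        _ ≤ 9*(9/8)^k := by linarith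
        _ = 8*(9/8)^(k+1) := by rw [pow_succ]; ring
  have h2 : ρ^u ≤ (8/9:ℝ)^u := pow_le_pow_left₀ ρ_pos.le ρ_le u
  have h3 : (u:ℝ) * ρ^u ≤ (u:ℝ) * (8/9)^u := by
    apply mul_le_mul_of_nonneg_left h2 (by positivity)
  have h4 : (u:ℝ) * (8/9)^u ≤ 8 := by
    have := key u
    have h5 : (0:ℝ) < (8/9:ℝ)^u := by positivity
    have h6 : ((8:ℝ)/9)^u * ((9:ℝ)/8)^u = 1 := by
      rw [← mul_pow]
      norm_num
    nlinarith [this, h5]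
  linarith

lemma sum_u_rr (n : ℕ) : ∑ u ∈ range n, (u:ℝ) * rr^u ≤ 72 := by
  have h1 : ∀ u ∈ range n, (u:ℝ) * rr^u ≤ 8 * ρ^u := by
    intro u _
    have hr : rr^u = ρ^u * ρ^u := by
      rw [← pow_add, ← two_mul, pow_mul, ρ_sq]
    rw [hr, ← mul_assoc]
    apply mul_le_mul_of_nonneg_right _ (pow_nonneg ρ_pos.le u)
    exact u_rho u
  calc ∑ u ∈ range n, (u:ℝ) * rr^u ≤ ∑ u ∈ range n, 8 * ρ^u := Finset.sum_le_sum h1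
    _ = 8 * ∑ u ∈ range n, ρ^u := by rw [Finset.mul_sum]
    _ ≤ 8 * 9 := by
        apply mul_le_mul_of_nonneg_left (geom_bound ρ ρ_pos.le ρ_le n) (by norm_num)
    _ = 72 := by norm_num

lemma weight_bound (n i : ℕ) : ∑ u ∈ range n, ((i:ℝ)+1+u) * rr^u ≤ 76 * ((i:ℝ)+1) := by
  have hsplit : ∀ u ∈ range n, ((i:ℝ)+1+u) * rr^u = ((i:ℝ)+1) * rr^u + (u:ℝ)*rr^u := by
    intro u _; ring
  rw [Finset.sum_congr rfl hsplit, Finset.sum_add_distrib, ← Finset.mul_sum]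
  have h1 : ((i:ℝ)+1) * (∑ u ∈ range n, rr^u) ≤ ((i:ℝ)+1) * 4 := by
    apply mul_le_mul_of_nonneg_left (geom_rr n) (by positivity)
  have h2 := sum_u_rr n
  have hi1 : (1:ℝ) ≤ (i:ℝ)+1 := by
    have : (0:ℝ) ≤ (i:ℝ) := Nat.cast_nonneg i
    linarith
  nlinarith

end Geometry

/-- main combinatorial contradiction -/
lemma no_dense (hsidon : ∀ a ∈ A, ∀ b ∈ A, ∀ c ∈ A, ∀ d ∈ A,
      a + b = c + d → ({a, b} : Set ℕ) = {c, d}) (j₀ : ℕ)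
    (hmass : ∀ j, j₀ ≤ j → (1000:ℝ) * (Real.sqrt 2 ^ j / Real.sqrt ((j:ℝ)+1))
      ≤ ∑ i ∈ range (j+1), (mF A i : ℝ)) : False := by
  classical
  set J : ℕ := 2*j₀ + 4 with hJ
  have hj₀J : j₀ ≤ J := by omega
  set σ2 : ℕ → ℝ := fun i => (mF A i : ℝ)^2 / 2^i with hσ2
  have hσ2nn : ∀ i, 0 ≤ σ2 i := by intro i; rw [hσ2]; positivity
  -- Step A
  have stepA : ∀ j ∈ Icc j₀ J, (250000:ℝ)
      ≤ ((j:ℝ)+1) * ∑ i ∈ range (j+1), σ2 i * rr^(j-i) := by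
    intro j hj
    have hjj₀ : j₀ ≤ j := (Finset.mem_Icc.1 hj).1
    have hmj := hmass j hjj₀
    have hsj : (0:ℝ) < Real.sqrt ((j:ℝ)+1) := Real.sqrt_pos.2 (by positivity)
    have hs2j : (0:ℝ) < Real.sqrt 2 ^ j := pow_pos sqrt2_pos j
    have hrrj : rr^j * Real.sqrt 2 ^ j = 1 := by
      rw [rr, inv_pow, inv_mul_cancel₀ (ne_of_gt hs2j)]
    have hrrjnn : (0:ℝ) ≤ rr^j := pow_nonneg rr_pos.le j
    have h1 : (1000:ℝ) / Real.sqrt ((j:ℝ)+1) ≤ ∑ i ∈ range (j+1), (mF A i : ℝ) * rr^j := by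
      have h2 := mul_le_mul_of_nonneg_right hmj hrrjnn
      calc (1000:ℝ) / Real.sqrt ((j:ℝ)+1)
          = 1000 * (Real.sqrt 2 ^ j / Real.sqrt ((j:ℝ)+1)) * rr^j := by
            rw [mul_comm ((1000:ℝ) * _) (rr^j)]
            rw [show (1000:ℝ) * (Real.sqrt 2 ^ j / Real.sqrt ((j:ℝ)+1))
              = Real.sqrt 2 ^ j * (1000 / Real.sqrt ((j:ℝ)+1)) by ring]
            rw [← mul_assoc, hrrj, one_mul]
        _ ≤ (∑ i ∈ range (j+1), (mF A i : ℝ)) * rr^j := h2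
        _ = ∑ i ∈ range (j+1), (mF A i : ℝ) * rr^j := by rw [Finset.sum_mul]
    -- Cauchy–Schwarz
    set f : ℕ → ℝ := fun i => ρ^(j-i) with hf
    set g : ℕ → ℝ := fun i => (mF A i : ℝ) * rr^i * ρ^(j-i) with hg
    have hfg : ∀ i ∈ range (j+1), f i * g i = (mF A i : ℝ) * rr^j := by
      intro i hi
      have hij : i ≤ j := Nat.lt_succ_iff.1 (Finset.mem_range.1 hi)
      rw [hf, hg]
      have hρρ : ρ^(j-i) * ρ^(j-i) = rr^(j-i) := by
        rw [← pow_add, ← two_mul, pow_mul, ρ_sq]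
      have hrr2 : rr^i * rr^(j-i) = rr^j := by
        rw [← pow_add]
        congr 1
        omega
      calc ρ^(j-i) * ((mF A i : ℝ) * rr^i * ρ^(j-i))
          = (mF A i : ℝ) * rr^i * (ρ^(j-i) * ρ^(j-i)) := by ring
        _ = (mF A i : ℝ) * (rr^i * rr^(j-i)) := by rw [hρρ]; ring
        _ = (mF A i : ℝ) * rr^j := by rw [hrr2]
    have hCS := Finset.sum_mul_sq_le_sq_mul_sq (range (j+1)) f g
    have hfsq : ∑ i ∈ range (j+1), f i ^ 2 ≤ 4 := by
      have hrw : ∀ i ∈ range (j+1), f i ^ 2 = rr^(j-i) := by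
        intro i _
        rw [hf]
        simp only
        rw [← pow_mul, mul_comm (j-i) 2, pow_mul, ρ_sq]
      rw [Finset.sum_congr rfl hrw]
      have hrefl : ∑ i ∈ range (j+1), rr^(j-i) = ∑ i ∈ range (j+1), rr^i := by
        have := Finset.sum_range_reflect (fun u => rr^u) (j+1)
        simpa using this
      rw [hrefl]
      exact geom_rr (j+1)
    have hgsq : ∀ i ∈ range (j+1), g i ^ 2 = σ2 i * rr^(j-i) := by
      intro i _
      rw [hg, hσ2]
      simp only
      have h2i : (rr^i)^2 = 1/2^i := by
        rw [← pow_mul, mul_comm i 2, pow_mul, rr_sq, div_pow, one_pow]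
      have hρ2 : (ρ^(j-i))^2 = rr^(j-i) := by
        rw [← pow_mul, mul_comm (j-i) 2, pow_mul, ρ_sq]
      calc ((mF A i : ℝ) * rr^i * ρ^(j-i))^2
          = (mF A i : ℝ)^2 * (rr^i)^2 * (ρ^(j-i))^2 := by ring
        _ = (mF A i : ℝ)^2 * (1/2^i) * rr^(j-i) := by rw [h2i, hρ2]
        _ = (mF A i : ℝ)^2/2^i * rr^(j-i) := by ring
    have hsumfg : (∑ i ∈ range (j+1), f i * g i) = ∑ i ∈ range (j+1), (mF A i : ℝ) * rr^j :=
      Finset.sum_congr rfl hfg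
    have hsumgsq : (∑ i ∈ range (j+1), g i ^ 2) = ∑ i ∈ range (j+1), σ2 i * rr^(j-i) :=
      Finset.sum_congr rfl hgsq
    rw [hsumfg, hsumgsq] at hCS
    have hgsqnn : (0:ℝ) ≤ ∑ i ∈ range (j+1), σ2 i * rr^(j-i) := by
      apply Finset.sum_nonneg
      intro i _
      exact mul_nonneg (hσ2nn i) (pow_nonneg rr_pos.le _)
    have hLHS : (1000 / Real.sqrt ((j:ℝ)+1))^2
        ≤ (∑ i ∈ range (j+1), (mF A i : ℝ) * rr^j)^2 := by
      apply pow_le_pow_left₀ (by positivity) h1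
    have hmain : (1000:ℝ)^2 / ((j:ℝ)+1) ≤ 4 * ∑ i ∈ range (j+1), σ2 i * rr^(j-i) := by
      have e1 : (1000 / Real.sqrt ((j:ℝ)+1))^2 = 1000^2 / ((j:ℝ)+1) := by
        rw [div_pow, Real.sq_sqrt (by positivity : (0:ℝ) ≤ (j:ℝ)+1)]
      calc (1000:ℝ)^2 / ((j:ℝ)+1) = (1000 / Real.sqrt ((j:ℝ)+1))^2 := e1.symm
        _ ≤ (∑ i ∈ range (j+1), (mF A i : ℝ) * rr^j)^2 := hLHS
        _ ≤ (∑ i ∈ range (j+1), f i ^2) * (∑ i ∈ range (j+1), σ2 i * rr^(j-i)) := hCS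
        _ ≤ 4 * ∑ i ∈ range (j+1), σ2 i * rr^(j-i) :=
            mul_le_mul_of_nonneg_right hfsq hgsqnn
    have hjpos : (0:ℝ) < (j:ℝ)+1 := by positivity
    rw [div_le_iff₀ hjpos] at hmain
    nlinarith [hmain]
  -- Step B : sum over j
  have stepB : (250000:ℝ) * ((j₀:ℝ)+5)
      ≤ ∑ j ∈ Icc j₀ J, ((j:ℝ)+1) * ∑ i ∈ range (j+1), σ2 i * rr^(j-i) := by
    have h1 := Finset.sum_le_sum stepA
    rw [Finset.sum_const, Nat.card_Icc] at h1
    have hcard : J + 1 - j₀ = j₀ + 5 := by omega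
    rw [hcard] at h1
    calc (250000:ℝ) * ((j₀:ℝ)+5) = ((j₀+5 : ℕ) : ℝ) * 250000 := by push_cast; ring
      _ = (j₀+5) • (250000:ℝ) := by rw [nsmul_eq_mul]
      _ ≤ _ := h1
  -- Step C : swap
  have stepC : ∑ j ∈ Icc j₀ J, ((j:ℝ)+1) * (∑ i ∈ range (j+1), σ2 i * rr^(j-i))
      ≤ 76 * ∑ i ∈ range (J+1), σ2 i * ((i:ℝ)+1) := by
    have hC1 : ∀ j ∈ Icc j₀ J, ((j:ℝ)+1) * (∑ i ∈ range (j+1), σ2 i * rr^(j-i))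
        = ∑ i ∈ range (J+1), (if i ≤ j then ((j:ℝ)+1) * (σ2 i * rr^(j-i)) else 0) := by
      intro j hj
      have hjJ : j ≤ J := (Finset.mem_Icc.1 hj).2
      rw [← Finset.sum_filter]
      have hset : (range (J+1)).filter (fun i => i ≤ j) = range (j+1) := by
        ext t
        simp only [Finset.mem_filter, Finset.mem_range, Nat.lt_succ_iff]
        omega
      rw [hset, Finset.mul_sum]
    rw [Finset.sum_congr rfl hC1, Finset.sum_comm]
    have hinner : ∀ i ∈ range (J+1),
        (∑ j ∈ Icc j₀ J, (if i ≤ j then ((j:ℝ)+1) * (σ2 i * rr^(j-i)) else 0))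
        ≤ σ2 i * (76 * ((i:ℝ)+1)) := by
      intro i hi
      have hiJ : i ≤ J := Nat.lt_succ_iff.1 (Finset.mem_range.1 hi)
      have hterm : ∀ j, (if i ≤ j then ((j:ℝ)+1) * (σ2 i * rr^(j-i)) else 0)
          = σ2 i * (if i ≤ j then ((j:ℝ)+1) * rr^(j-i) else 0) := by
        intro j
        split
        · ring
        · ring
      rw [Finset.sum_congr rfl (fun j _ => hterm j), ← Finset.mul_sum]
      apply mul_le_mul_of_nonneg_left _ (hσ2nn i)
      rw [← Finset.sum_filter]
      have hsub : (Icc j₀ J).filter (fun j => i ≤ j) ⊆ Icc i J := by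
        intro t ht
        have h1 := Finset.mem_filter.1 ht
        have h2 := Finset.mem_Icc.1 h1.1
        exact Finset.mem_Icc.2 ⟨h1.2, h2.2⟩
      calc ∑ j ∈ (Icc j₀ J).filter (fun j => i ≤ j), ((j:ℝ)+1) * rr^(j-i)
          ≤ ∑ j ∈ Icc i J, ((j:ℝ)+1) * rr^(j-i) := by
            apply Finset.sum_le_sum_of_subset_of_nonneg hsub
            intro t _ _
            have : (0:ℝ) ≤ (t:ℝ)+1 := by positivity
            exact mul_nonneg this (pow_nonneg rr_pos.le _)
        _ = ∑ u ∈ range (J+1-i), (((i+u : ℕ):ℝ)+1) * rr^((i+u)-i) := by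
            rw [← Finset.Ico_add_one_right_eq_Icc, Finset.sum_Ico_eq_sum_range]
        _ = ∑ u ∈ range (J+1-i), ((i:ℝ)+1+(u:ℝ)) * rr^u := by
            apply Finset.sum_congr rfl
            intro u _
            have h3 : i + u - i = u := by omega
            rw [h3]
            push_cast
            ring
        _ ≤ 76 * ((i:ℝ)+1) := weight_bound (J+1-i) i
    calc ∑ i ∈ range (J+1), ∑ j ∈ Icc j₀ J, (if i ≤ j then ((j:ℝ)+1) * (σ2 i * rr^(j-i)) else 0)
        ≤ ∑ i ∈ range (J+1), σ2 i * (76 * ((i:ℝ)+1)) := Finset.sum_le_sum hinner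
      _ = 76 * ∑ i ∈ range (J+1), σ2 i * ((i:ℝ)+1) := by
          rw [Finset.mul_sum]
          apply Finset.sum_congr rfl
          intro i _
          ring
  -- Step D
  have stepD : ∑ i ∈ range (J+1), σ2 i * ((i:ℝ)+1) ≤ 32 * ((J:ℝ)+1) + 1228 := by
    rw [← Finset.sum_filter_add_sum_filter_not (range (J+1)) (fun i => 2^i ≤ (mF A i)^4)]
    have hlight : ∑ i ∈ (range (J+1)).filter (fun i => ¬ 2^i ≤ (mF A i)^4),
        σ2 i * ((i:ℝ)+1) ≤ 76 := by
      have hpt : ∀ i ∈ (range (J+1)).filter (fun i => ¬ 2^i ≤ (mF A i)^4),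
          σ2 i * ((i:ℝ)+1) ≤ ((0:ℝ)+1+(i:ℝ)) * rr^i := by
        intro i hi
        have hlt : (mF A i)^4 < 2^i := by
          have := (Finset.mem_filter.1 hi).2
          omega
        have hltR : ((mF A i : ℝ))^4 < 2^i := by exact_mod_cast hlt
        have hsq : ((2:ℝ))^i = (Real.sqrt 2 ^ i)^2 := by
          rw [← pow_mul, mul_comm i 2, pow_mul, Real.sq_sqrt (by norm_num : (0:ℝ) ≤ 2)]
        have hm2 : ((mF A i : ℝ))^2 ≤ Real.sqrt 2 ^ i := by
          by_contra hcon
          push_neg at hcon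
          have h1 : (Real.sqrt 2 ^ i)^2 ≤ (((mF A i : ℝ))^2)^2 := by
            apply pow_le_pow_left₀ (pow_nonneg (Real.sqrt_nonneg 2) i) hcon.le
          rw [← hsq] at h1
          have : ((mF A i : ℝ))^4 = (((mF A i : ℝ))^2)^2 := by ring
          linarith [hltR, this ▸ h1]
        have hσrr : σ2 i ≤ rr^i := by
          rw [hσ2]
          simp only
          rw [div_le_iff₀ (by positivity : (0:ℝ) < 2^i)]
          have : rr^i * 2^i = Real.sqrt 2 ^ i := by
            rw [rr, inv_pow, hsq]
            rw [pow_two]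
            have hne : Real.sqrt 2 ^ i ≠ 0 := ne_of_gt (pow_pos sqrt2_pos i)
            field_simp
          rw [this]
          exact hm2
        have hrrnn : (0:ℝ) ≤ rr^i := pow_nonneg rr_pos.le i
        calc σ2 i * ((i:ℝ)+1) ≤ rr^i * ((i:ℝ)+1) := by
              apply mul_le_mul_of_nonneg_right hσrr (by positivity)
          _ = ((0:ℝ)+1+(i:ℝ)) * rr^i := by ring
      calc ∑ i ∈ (range (J+1)).filter (fun i => ¬ 2^i ≤ (mF A i)^4), σ2 i * ((i:ℝ)+1)
          ≤ ∑ i ∈ (range (J+1)).filter (fun i => ¬ 2^i ≤ (mF A i)^4),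
            ((0:ℝ)+1+(i:ℝ)) * rr^i := Finset.sum_le_sum hpt
        _ ≤ ∑ i ∈ range (J+1), ((0:ℝ)+1+(i:ℝ)) * rr^i := by
            apply Finset.sum_le_sum_of_subset_of_nonneg (Finset.filter_subset _ _)
            intro t _ _
            have : (0:ℝ) ≤ (t:ℝ) := Nat.cast_nonneg t
            have hrrnn : (0:ℝ) ≤ rr^t := pow_nonneg rr_pos.le t
            nlinarith
        _ ≤ 76 * ((0:ℝ)+1) := by
            have := weight_bound (J+1) 0
            simpa using this
        _ = 76 := by norm_num
    have hheavy : ∑ i ∈ (range (J+1)).filter (fun i => 2^i ≤ (mF A i)^4),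
        σ2 i * ((i:ℝ)+1) ≤ 32 * ((J:ℝ)+1) + 1152 := by
      rw [← Finset.sum_filter_add_sum_filter_not
        ((range (J+1)).filter (fun i => 2^i ≤ (mF A i)^4)) (fun i => 6 ≤ i)]
      have hbig : ∑ i ∈ ((range (J+1)).filter (fun i => 2^i ≤ (mF A i)^4)).filter (fun i => 6 ≤ i),
          σ2 i * ((i:ℝ)+1) ≤ 32 * ((J:ℝ)+1) := by
        have hpt : ∀ i ∈ ((range (J+1)).filter (fun i => 2^i ≤ (mF A i)^4)).filter (fun i => 6 ≤ i),
            σ2 i * ((i:ℝ)+1) ≤ 8 * (((i/4 : ℕ):ℝ) * ((mF A i : ℝ)^2 / 2^(i+2))) * 4 := by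
          intro i hi
          have h6 : 6 ≤ i := (Finset.mem_filter.1 hi).2
          have hdiv : (i:ℝ)+1 ≤ 8 * ((i/4 : ℕ):ℝ) := by
            have : i + 1 ≤ 8 * (i/4) := by omega
            exact_mod_cast this
          have he : ((mF A i : ℝ)^2 / 2^(i+2)) * 4 = σ2 i := by
            rw [hσ2]
            simp only
            rw [pow_add]
            ring
          calc σ2 i * ((i:ℝ)+1) ≤ σ2 i * (8 * ((i/4 : ℕ):ℝ)) := by
                apply mul_le_mul_of_nonneg_left hdiv (hσ2nn i)
            _ = 8 * (((i/4 : ℕ):ℝ) * ((mF A i : ℝ)^2 / 2^(i+2))) * 4 := by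
                rw [← he]; ring
        calc ∑ i ∈ ((range (J+1)).filter (fun i => 2^i ≤ (mF A i)^4)).filter (fun i => 6 ≤ i),
            σ2 i * ((i:ℝ)+1)
            ≤ ∑ i ∈ ((range (J+1)).filter (fun i => 2^i ≤ (mF A i)^4)).filter (fun i => 6 ≤ i),
              8 * (((i/4 : ℕ):ℝ) * ((mF A i : ℝ)^2 / 2^(i+2))) * 4 := Finset.sum_le_sum hpt
          _ ≤ ∑ i ∈ (range (J+1)).filter (fun i => 2^i ≤ (mF A i)^4),
              8 * (((i/4 : ℕ):ℝ) * ((mF A i : ℝ)^2 / 2^(i+2))) * 4 := by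
              apply Finset.sum_le_sum_of_subset_of_nonneg (Finset.filter_subset _ _)
              intro t _ _
              positivity
          _ = 32 * ∑ i ∈ (range (J+1)).filter (fun i => 2^i ≤ (mF A i)^4),
              ((i/4 : ℕ):ℝ) * ((mF A i : ℝ)^2 / 2^(i+2)) := by
              rw [Finset.mul_sum]
              apply Finset.sum_congr rfl
              intro i _
              ring
          _ ≤ 32 * ((J:ℝ)+1) := by
              apply mul_le_mul_of_nonneg_left (heavySum hsidon J) (by norm_num)
      have hsmall : ∑ i ∈ ((range (J+1)).filter (fun i => 2^i ≤ (mF A i)^4)).filter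
          (fun i => ¬ 6 ≤ i), σ2 i * ((i:ℝ)+1) ≤ 1152 := by
        have hpt : ∀ i ∈ ((range (J+1)).filter (fun i => 2^i ≤ (mF A i)^4)).filter
            (fun i => ¬ 6 ≤ i), σ2 i * ((i:ℝ)+1) ≤ 192 := by
          intro i hi
          have h6 : i < 6 := by
            have := (Finset.mem_filter.1 hi).2
            omega
          have hm := mF_le A i
          have hmR : (mF A i : ℝ) ≤ 2^i := by exact_mod_cast hm
          have hσb : σ2 i ≤ 2^i := by
            rw [hσ2]
            simp only
            rw [div_le_iff₀ (by positivity : (0:ℝ) < 2^i)]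
            have hmnn : (0:ℝ) ≤ (mF A i : ℝ) := Nat.cast_nonneg _
            calc (mF A i : ℝ)^2 ≤ (2^i : ℝ)^2 := by nlinarith
              _ = 2^i * 2^i := by ring
          have h2i : ((2:ℝ))^i ≤ 32 := by
            calc ((2:ℝ))^i ≤ 2^5 := by
                  apply pow_le_pow_right₀ (by norm_num)
                  omega
              _ = 32 := by norm_num
          have hi1 : (i:ℝ)+1 ≤ 6 := by
            have : (i:ℝ) ≤ 5 := by exact_mod_cast Nat.lt_succ_iff.1 h6
            linarith
          have hσnn := hσ2nn i
          nlinarith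
        have hcard : (((range (J+1)).filter (fun i => 2^i ≤ (mF A i)^4)).filter
            (fun i => ¬ 6 ≤ i)).card ≤ 6 := by
          have hsub : ((range (J+1)).filter (fun i => 2^i ≤ (mF A i)^4)).filter
              (fun i => ¬ 6 ≤ i) ⊆ range 6 := by
            intro t ht
            have := (Finset.mem_filter.1 ht).2
            rw [Finset.mem_range]
            omega
          have := Finset.card_le_card hsub
          simpa using this
        have hb := Finset.sum_le_card_nsmul (((range (J+1)).filter (fun i => 2^i ≤ (mF A i)^4)).filter (fun i => ¬ 6 ≤ i)) (fun i => σ2 i * ((i:ℝ)+1)) 192 hpt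
        have hcardR : ((((range (J+1)).filter (fun i => 2^i ≤ (mF A i)^4)).filter (fun i => ¬ 6 ≤ i)).card : ℝ) ≤ 6 := by exact_mod_cast hcard
        rw [nsmul_eq_mul] at hb
        nlinarith [hb, hcardR]
      calc _ ≤ (32 * ((J:ℝ)+1)) + 1152 := add_le_add hbig hsmall
        _ = 32 * ((J:ℝ)+1) + 1152 := by ring
    calc _ ≤ (32 * ((J:ℝ)+1) + 1152) + 76 := add_le_add hheavy hlight
      _ ≤ 32 * ((J:ℝ)+1) + 1228 := by linarith
  -- combine
  have h76 : 76 * (∑ i ∈ range (J+1), σ2 i * ((i:ℝ)+1)) ≤ 76 * (32 * ((J:ℝ)+1) + 1228) :=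
    mul_le_mul_of_nonneg_left stepD (by norm_num)
  have hfinal : (250000:ℝ) * ((j₀:ℝ)+5) ≤ 76 * (32 * ((J:ℝ)+1) + 1228) :=
    le_trans stepB (le_trans stepC h76)
  have hJr : (J:ℝ) = 2*(j₀:ℝ) + 4 := by rw [hJ]; push_cast; ring
  rw [hJr] at hfinal
  have hj₀nn : (0:ℝ) ≤ (j₀:ℝ) := Nat.cast_nonneg j₀
  nlinarith [hfinal]

lemma cnt_eq (A : Set ℕ) (n : ℕ) :
    Nat.card {a : ℕ | a ∈ A ∧ a ≤ n} = cntF A n := by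
  classical
  have hset : {a : ℕ | a ∈ A ∧ a ≤ n}
      = ↑(@Finset.filter _ (fun a => a ∈ A) (Classical.decPred _) (Finset.range (n+1))) := by
    ext a
    simp only [Set.mem_setOf_eq, Finset.coe_filter, Finset.mem_range, Nat.lt_succ_iff]
    tauto
  rw [hset, Nat.card_coe_set_eq, Set.ncard_coe_finset]
  rfl

lemma sqrt_pow_two (k : ℕ) : Real.sqrt ((2:ℝ)^k) = Real.sqrt 2 ^ k := by
  have h2 : ((Real.sqrt 2)^k)^2 = (2:ℝ)^k := by
    rw [← pow_mul, mul_comm k 2, pow_mul, Real.sq_sqrt (by norm_num : (0:ℝ) ≤ 2)]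
  rw [← h2, Real.sqrt_sq (pow_nonneg (Real.sqrt_nonneg 2) k)]

lemma sqrt_j_bound (j : ℕ) : Real.sqrt ((j:ℝ)+1) ≤ 400 * Real.sqrt 2 ^ j := by
  have h1 : (j:ℝ)+1 ≤ 160000 * 2^j := by
    have h2 : j < 2^j := Nat.lt_two_pow_self
    have h3 : (j:ℝ) + 1 ≤ (2:ℝ)^j := by
      have : (j+1 : ℕ) ≤ 2^j := h2
      calc (j:ℝ)+1 = ((j+1:ℕ):ℝ) := by push_cast; ring
        _ ≤ ((2^j : ℕ):ℝ) := by exact_mod_cast this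
        _ = (2:ℝ)^j := by push_cast; ring
    have h4 : (0:ℝ) ≤ (2:ℝ)^j := by positivity
    nlinarith
  calc Real.sqrt ((j:ℝ)+1) ≤ Real.sqrt (160000 * 2^j) := Real.sqrt_le_sqrt h1
    _ = Real.sqrt 160000 * Real.sqrt ((2:ℝ)^j) := Real.sqrt_mul (by norm_num) _
    _ = 400 * Real.sqrt 2 ^ j := by
        rw [sqrt_pow_two, show (160000:ℝ) = 400^2 by norm_num,
          Real.sqrt_sq (by norm_num : (0:ℝ) ≤ 400)]

lemma sqrt2_ge : (7:ℝ)/5 ≤ Real.sqrt 2 := by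
  nlinarith [Real.sq_sqrt (by norm_num : (0:ℝ) ≤ 2), Real.sqrt_nonneg 2]

end ErdosSidon

open ErdosSidon

/-- Erdős: every infinite Sidon set A of positive integers has
liminf A(n)·√(log n / n) finite; in particular no infinite Sidon set satisfies
A(n) ≥ c√n for some c > 0 and all large n. -/
theorem erdos_infinite_sidon (A : Set ℕ) (hA : A.Infinite) (hpos : ∀ a ∈ A, 1 ≤ a)
    (hsidon : ∀ a ∈ A, ∀ b ∈ A, ∀ c ∈ A, ∀ d ∈ A,
      a + b = c + d → ({a, b} : Set ℕ) = {c, d}) :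
    (∃ L : ℝ, ∃ᶠ n : ℕ in Filter.atTop,
      (Nat.card {a : ℕ | a ∈ A ∧ a ≤ n} : ℝ) * Real.sqrt (Real.log n / n) ≤ L) ∧
    ¬ ∃ c : ℝ, 0 < c ∧ ∃ n₀ : ℕ, ∀ n ≥ n₀,
      c * Real.sqrt n ≤ (Nat.card {a : ℕ | a ∈ A ∧ a ≤ n} : ℝ) := by
  classical
  have key : ∃ L : ℝ, ∃ᶠ n : ℕ in Filter.atTop,
      (Nat.card {a : ℕ | a ∈ A ∧ a ≤ n} : ℝ) * Real.sqrt (Real.log n / n) ≤ L := by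
    by_contra hcon
    push_neg at hcon
    have h1000 := hcon 1000
    rw [Filter.eventually_atTop] at h1000
    obtain ⟨n₀, hn₀⟩ := h1000
    set j₀ := n₀ + 1 with hj₀
    apply ErdosSidon.no_dense (A := A) hsidon j₀
    intro j hj
    set n := 2^(j+1) with hn
    have hnn₀ : n₀ ≤ n := by
      have h1 : j < 2^j := Nat.lt_two_pow_self
      have h2 : (2:ℕ)^j ≤ 2^(j+1) := Nat.pow_le_pow_right (by norm_num) (by omega)
      omega
    have hfn := hn₀ n hnn₀
    have hncast : ((n:ℕ):ℝ) = (2:ℝ)^(j+1) := by rw [hn]; push_cast; ring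
    have hn2 : (2:ℝ) ≤ ((n:ℕ):ℝ) := by
      rw [hncast]
      calc (2:ℝ) = 2^1 := by norm_num
        _ ≤ 2^(j+1) := pow_le_pow_right₀ (by norm_num) (by omega)
    have hlogpos : 0 < Real.log n := Real.log_pos (by linarith)
    have hnpos : (0:ℝ) < (n:ℝ) := by linarith
    have hq : (0:ℝ) < Real.log n / n := div_pos hlogpos hnpos
    have hsq : 0 < Real.sqrt (Real.log n / n) := Real.sqrt_pos.2 hq
    rw [cnt_eq A n] at hfn
    -- cnt > 1000 * sqrt(n / log n)
    have hinv : Real.sqrt ((n:ℝ)/Real.log n) = (Real.sqrt (Real.log n / (n:ℝ)))⁻¹ := by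
      rw [← Real.sqrt_inv]
      congr 1
      rw [inv_div]
    have hcnt : 1000 * Real.sqrt ((n:ℝ) / Real.log n) < (cntF A n : ℝ) := by
      have h2 := mul_lt_mul_of_pos_right hfn (inv_pos.2 hsq)
      rw [mul_assoc, mul_inv_cancel₀ (ne_of_gt hsq), mul_one] at h2
      rw [hinv]
      exact h2
    -- sqrt(n/log n) ≥ (√2)^{j+1}/√(j+1)
    have hlog_le : Real.log n ≤ (j:ℝ)+1 := by
      rw [hncast, Real.log_pow]
      have hl2 : Real.log 2 ≤ 1 := by
        have := Real.log_two_lt_d9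
        linarith
      have hj1 : (0:ℝ) ≤ ((j+1 : ℕ):ℝ) := by positivity
      calc ((j+1 : ℕ):ℝ) * Real.log 2 ≤ ((j+1:ℕ):ℝ) * 1 := by
            apply mul_le_mul_of_nonneg_left hl2 hj1
        _ = (j:ℝ)+1 := by push_cast; ring
    have hjpos : (0:ℝ) < (j:ℝ)+1 := by positivity
    have hdivge : ((n:ℝ))/((j:ℝ)+1) ≤ (n:ℝ)/Real.log n :=
      div_le_div_of_nonneg_left hnpos.le hlogpos hlog_le
    have hs2 : Real.sqrt ((n:ℝ)/((j:ℝ)+1)) = Real.sqrt 2 ^ (j+1) / Real.sqrt ((j:ℝ)+1) := by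
      rw [hncast, Real.sqrt_div (by positivity) _, sqrt_pow_two]
    have hSpos : 0 < Real.sqrt ((j:ℝ)+1) := Real.sqrt_pos.2 hjpos
    have hchain : 1000 * (Real.sqrt 2 ^ (j+1) / Real.sqrt ((j:ℝ)+1)) < (cntF A n : ℝ) := by
      calc 1000 * (Real.sqrt 2 ^ (j+1) / Real.sqrt ((j:ℝ)+1))
          = 1000 * Real.sqrt ((n:ℝ)/((j:ℝ)+1)) := by rw [hs2]
        _ ≤ 1000 * Real.sqrt ((n:ℝ)/Real.log n) := by
            apply mul_le_mul_of_nonneg_left (Real.sqrt_le_sqrt hdivge) (by norm_num)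
        _ < (cntF A n : ℝ) := hcnt
    -- the key δ step
    have hkey : 1000 * (Real.sqrt 2 ^ j / Real.sqrt ((j:ℝ)+1)) + 1
        ≤ 1000 * (Real.sqrt 2 ^ (j+1) / Real.sqrt ((j:ℝ)+1)) := by
      have h400 := sqrt_j_bound j
      have h75 := sqrt2_ge
      have hX0 : (0:ℝ) ≤ Real.sqrt 2 ^ j := pow_nonneg (Real.sqrt_nonneg 2) j
      have hexp : Real.sqrt 2 ^ (j+1) = Real.sqrt 2 ^ j * Real.sqrt 2 := pow_succ _ _
      have hgoal : (1000 * (Real.sqrt 2 ^ j) + Real.sqrt ((j:ℝ)+1))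
          ≤ 1000 * Real.sqrt 2 ^ (j+1) := by
        rw [hexp]
        nlinarith
      have e1 : 1000 * (Real.sqrt 2 ^ j / Real.sqrt ((j:ℝ)+1)) + 1
          = (1000 * (Real.sqrt 2 ^ j) + Real.sqrt ((j:ℝ)+1)) / Real.sqrt ((j:ℝ)+1) := by
        field_simp
      rw [e1]
      rw [div_le_iff₀ hSpos]
      calc 1000 * (Real.sqrt 2 ^ j) + Real.sqrt ((j:ℝ)+1)
          ≤ 1000 * Real.sqrt 2 ^ (j+1) := hgoal
        _ = 1000 * (Real.sqrt 2 ^ (j+1) / Real.sqrt ((j:ℝ)+1)) * Real.sqrt ((j:ℝ)+1) := by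
            field_simp
    -- cover
    have hcover := ErdosSidon.cover (A := A) hpos j
    have hcoverR : (cntF A n : ℝ) ≤ 1 + ∑ i ∈ Finset.range (j+1), (mF A i : ℝ) := by
      rw [hn]
      have : ((cntF A (2^(j+1)) : ℕ):ℝ) ≤ ((1 + ∑ i ∈ Finset.range (j+1), mF A i : ℕ):ℝ) := by
        exact_mod_cast hcover
      push_cast at this
      exact this
    linarith
  refine ⟨key, ?_⟩
  rintro ⟨c, hc, n₀, hcn⟩
  obtain ⟨L, hL⟩ := key
  set M := max n₀ (⌈Real.exp ((L/c)^2 + 1)⌉₊ + 1) with hM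
  obtain ⟨n, hnM, hfn⟩ := (Filter.frequently_atTop.1 hL) M
  have hn₀ : n₀ ≤ n := le_trans (le_max_left _ _) hnM
  have hcnt := hcn n hn₀
  have hnbig : (⌈Real.exp ((L/c)^2+1)⌉₊ + 1 : ℕ) ≤ n := le_trans (le_max_right _ _) hnM
  have hnR : Real.exp ((L/c)^2 + 1) ≤ (n:ℝ) := by
    have h1 := Nat.le_ceil (Real.exp ((L/c)^2+1))
    have h2 : ((⌈Real.exp ((L/c)^2+1)⌉₊ : ℕ):ℝ) + 1 ≤ (n:ℝ) := by
      exact_mod_cast hnbig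
    linarith
  have hnpos : (0:ℝ) < (n:ℝ) := lt_of_lt_of_le (Real.exp_pos _) hnR
  have hlog : (L/c)^2 + 1 ≤ Real.log n := by
    rw [Real.le_log_iff_exp_le hnpos]
    exact hnR
  have h1 : Real.sqrt (Real.log n) = Real.sqrt (n:ℝ) * Real.sqrt (Real.log n / n) := by
    rw [← Real.sqrt_mul hnpos.le]
    congr 1
    field_simp
  have h2 : c * Real.sqrt (Real.log n) ≤ (Nat.card {a : ℕ | a ∈ A ∧ a ≤ n} : ℝ)
      * Real.sqrt (Real.log n / n) := by
    rw [h1, ← mul_assoc]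
    exact mul_le_mul_of_nonneg_right hcnt (Real.sqrt_nonneg _)
  have h3 : c * Real.sqrt (Real.log n) ≤ L := le_trans h2 hfn
  have h4 : L < c * Real.sqrt (Real.log n) := by
    have h5 : Real.sqrt ((L/c)^2) < Real.sqrt (Real.log n) := by
      apply Real.sqrt_lt_sqrt (sq_nonneg _)
      linarith
    have h6 : Real.sqrt ((L/c)^2) = |L/c| := Real.sqrt_sq_eq_abs _
    have h7 : L/c ≤ |L/c| := le_abs_self _
    have h8 : L = c * (L/c) := by field_simp
    calc L = c*(L/c) := h8
      _ ≤ c * |L/c| := mul_le_mul_of_nonneg_left h7 hc.le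
      _ = c * Real.sqrt ((L/c)^2) := by rw [h6]
      _ < c * Real.sqrt (Real.log n) := by
          exact mul_lt_mul_of_pos_left h5 hc
  linarith
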